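/- Let k ≥ 2 be an integer and let G be a graph with |V(G)| ≥ k and minimum degree δ(G) ≥ |V(G)|/k + k. Then there exist an integer s < k and a set U ⊆ V(G) with |U| ≤ s − 1 such that G − U is the disjoint union of s vertex-disjoint 2-connected graphs. -/

import Mathlib

open SimpleGraph

/-- A graph is 2-connected if it has at least 3 vertices and remains connected after the
deletion of any single vertex. -/
def TwoConnected {α : Type*} [Fintype α] (G : SimpleGraph α) : Prop :=
  3 ≤ Fintype.card α ∧ ∀ v : α, (G.induce {u | u ≠ v}).Connected

set_option linter.unusedSectionVars false

section Aux
open Finset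

variable {V : Type*} [Fintype V] [DecidableEq V]

/-- the graph G with vertex set U "deleted" (kept as isolated vertices) -/
def del (G : SimpleGraph V) (U : Finset V) : SimpleGraph V where
  Adj x y := G.Adj x y ∧ x ∉ U ∧ y ∉ U
  symm := ⟨by rintro x y ⟨h, hx, hy⟩; exact ⟨h.symm, hy, hx⟩⟩
  loopless := ⟨by rintro x ⟨h, _, _⟩; exact G.loopless.irrefl x h⟩

noncomputable def compF (G : SimpleGraph V) (U : Finset V) (x : V) : Finset V :=
  @Finset.filter _ (fun y => (del G U).Reachable x y) (Classical.decPred _) Finset.univ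

lemma mem_compF {G : SimpleGraph V} {U : Finset V} {x y : V} :
    y ∈ compF G U x ↔ (del G U).Reachable x y := by
  simp [compF]

lemma compF_self {G : SimpleGraph V} {U : Finset V} (x : V) : x ∈ compF G U x :=
  mem_compF.2 (Reachable.refl x)

lemma reach_notmem {G : SimpleGraph V} {U : Finset V} {x y : V} (hx : x ∉ U)
    (h : (del G U).Reachable x y) : y ∉ U := by
  obtain ⟨w⟩ := h
  induction w with
  | nil => exact hx
  | cons h p ih => exact ih h.2.2

lemma compF_subset {G : SimpleGraph V} {U : Finset V} {x : V} (hx : x ∉ U) :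
    compF G U x ⊆ Finset.univ \ U := by
  intro y hy
  exact Finset.mem_sdiff.2 ⟨Finset.mem_univ y, reach_notmem hx (mem_compF.1 hy)⟩

lemma compF_eq {G : SimpleGraph V} {U : Finset V} {x y : V} (h : y ∈ compF G U x) :
    compF G U x = compF G U y := by
  have hxy := mem_compF.1 h
  ext z
  simp only [mem_compF]
  exact ⟨fun h' => hxy.symm.trans h', fun h' => hxy.trans h'⟩

lemma compF_card {G : SimpleGraph V} [DecidableRel G.Adj] {U : Finset V} {x : V} (hx : x ∉ U) :
    G.degree x + 1 ≤ (compF G U x).card + U.card := by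
  have hsub : insert x (G.neighborFinset x \ U) ⊆ compF G U x := by
    intro z hz
    rcases Finset.mem_insert.1 hz with rfl | hz
    · exact compF_self z
    · obtain ⟨hadj, hzU⟩ := Finset.mem_sdiff.1 hz
      exact mem_compF.2 (SimpleGraph.Adj.reachable
        ⟨(G.mem_neighborFinset x z).1 hadj, hx, hzU⟩)
  have h1 : (G.neighborFinset x \ U).card + 1 ≤ (compF G U x).card := by
    have := Finset.card_le_card hsub
    rwa [Finset.card_insert_of_notMem (by
      intro hmem
      exact G.loopless.irrefl x ((G.mem_neighborFinset x x).1 (Finset.mem_sdiff.1 hmem).1))] at this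
  have h2 : G.degree x ≤ (G.neighborFinset x \ U).card + U.card :=
    Finset.card_le_card_sdiff_add_card
  omega

noncomputable def comps (G : SimpleGraph V) (U : Finset V) : Finset (Finset V) :=
  (Finset.univ \ U).image (compF G U)

lemma mem_comps {G : SimpleGraph V} {U : Finset V} {C : Finset V} :
    C ∈ comps G U ↔ ∃ x, x ∉ U ∧ compF G U x = C := by
  simp [comps]

lemma comps_disjoint {G : SimpleGraph V} {U : Finset V} {C₁ C₂ : Finset V}
    (h1 : C₁ ∈ comps G U) (h2 : C₂ ∈ comps G U) (hne : C₁ ≠ C₂) : Disjoint C₁ C₂ := by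
  obtain ⟨x, hx, rfl⟩ := mem_comps.1 h1
  obtain ⟨y, hy, rfl⟩ := mem_comps.1 h2
  rw [Finset.disjoint_left]
  intro z hz1 hz2
  exact hne ((compF_eq hz1).trans (compF_eq hz2).symm)

lemma comps_biUnion {G : SimpleGraph V} {U : Finset V} :
    (comps G U).biUnion id = Finset.univ \ U := by
  ext z
  simp only [Finset.mem_biUnion, id]
  constructor
  · rintro ⟨C, hC, hz⟩
    obtain ⟨x, hx, rfl⟩ := mem_comps.1 hC
    exact compF_subset hx hz
  · intro hz
    exact ⟨compF G U z, mem_comps.2 ⟨z, (Finset.mem_sdiff.1 hz).2, rfl⟩, compF_self z⟩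

lemma comps_sum {G : SimpleGraph V} {U : Finset V} :
    ∑ C ∈ comps G U, C.card = Fintype.card V - U.card := by
  have := Finset.card_biUnion (s := comps G U) (t := id)
    (fun C hC D hD hne => comps_disjoint hC hD hne)
  rw [comps_biUnion, Finset.card_sdiff_of_subset (Finset.subset_univ U), Finset.card_univ] at this
  simpa using this.symm

/-- key counting lemma: if |U| ≤ k-1 then the number of components of G - U is < k -/
lemma comps_count {G : SimpleGraph V} [DecidableRel G.Adj] {U : Finset V} {k : ℕ}
    (hk : 2 ≤ k) (hcard : k ≤ Fintype.card V)
    (hdeg : (Fintype.card V : ℝ) / (k : ℝ) + (k : ℝ) ≤ (G.minDegree : ℝ))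
    (hU : U.card + 1 ≤ k) : (comps G U).card < k := by
  have : Nonempty V := by
    rw [← Fintype.card_pos_iff]; omega
  set n := Fintype.card V with hn
  set s := (comps G U).card with hs
  -- each component is large
  have hcomp : ∀ C ∈ comps G U, G.minDegree + 1 ≤ C.card + U.card := by
    intro C hC
    obtain ⟨x, hx, rfl⟩ := mem_comps.1 hC
    have := compF_card (G := G) (U := U) hx
    have := G.minDegree_le_degree x
    omega
  have hsum : s * (G.minDegree + 1) ≤ ∑ C ∈ comps G U, (C.card + U.card) := by
    rw [← Finset.sum_const_nat (m := G.minDegree + 1) (fun _ _ => rfl)]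
    exact Finset.sum_le_sum hcomp
  have hsum2 : ∑ C ∈ comps G U, (C.card + U.card) = (n - U.card) + s * U.card := by
    rw [Finset.sum_add_distrib, comps_sum, Finset.sum_const, smul_eq_mul]
  have hUn : U.card ≤ n := by
    rw [hn]; exact Finset.card_le_univ U
  -- pass to reals
  have key : (s : ℝ) * (G.minDegree + 1) ≤ (n : ℝ) - U.card + s * U.card := by
    have := hsum.trans_eq hsum2
    have : (s * (G.minDegree + 1) : ℝ) ≤ ((n - U.card) + s * U.card : ℕ) := by
      exact_mod_cast this
    push_cast [hUn] at this
    linarith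
  by_contra hcon
  push_neg at hcon
  have hconR : (k : ℝ) ≤ s := by exact_mod_cast hcon
  have hkR : (2 : ℝ) ≤ k := by exact_mod_cast hk
  have hnk : (k : ℝ) ≤ n := by exact_mod_cast hcard
  have huR : (U.card : ℝ) + 1 ≤ k := by exact_mod_cast hU
  have hk0 : (0 : ℝ) < k := by linarith
  have hq : (k : ℝ) * ((n : ℝ) / k) = n := by field_simp
  nlinarith [mul_le_mul_of_nonneg_left hdeg (show (0:ℝ) ≤ (s:ℝ) by positivity),
    mul_nonneg (sub_nonneg.2 hconR) (div_nonneg (show (0:ℝ) ≤ (n:ℝ) by positivity) hk0.le),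
    mul_le_mul_of_nonneg_left (show (U.card : ℝ) ≤ (k:ℝ) - 1 by linarith)
      (show (0:ℝ) ≤ (s:ℝ) - 1 by linarith)]

lemma reach_induce (H : SimpleGraph V) (x : V) (C : Finset V)
    (hC : ∀ y, y ∈ C ↔ H.Reachable x y) {a b : V} (w : H.Walk a b) :
    ∀ (ha : a ∈ C) (hb : b ∈ C), (H.induce (↑C : Set V)).Reachable ⟨a, ha⟩ ⟨b, hb⟩ := by
  induction w with
  | nil => intro ha hb; exact Reachable.refl _
  | @cons u c b h p ih =>
    intro ha hb
    have hcC : c ∈ C := (hC c).2 (((hC u).1 ha).trans h.reachable)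
    have hadj : (H.induce (↑C : Set V)).Adj ⟨u, ha⟩ ⟨c, hcC⟩ := h
    exact hadj.reachable.trans (ih hcC hb)

lemma reach_in_compF {G : SimpleGraph V} {U : Finset V} {x a b : V}
    (ha : a ∈ compF G U x) (hb : b ∈ compF G U x) :
    ((del G U).induce (↑(compF G U x) : Set V)).Reachable ⟨a, ha⟩ ⟨b, hb⟩ := by
  obtain ⟨w⟩ := (mem_compF.1 ha).symm.trans (mem_compF.1 hb)
  exact reach_induce (del G U) x _ (fun y => mem_compF) w ha hb

lemma del_mono {G : SimpleGraph V} {U U' : Finset V} (h : U ⊆ U') : del G U' ≤ del G U :=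
  fun _ _ hadj => ⟨hadj.1, fun m => hadj.2.1 (h m), fun m => hadj.2.2 (h m)⟩


lemma recMain (G : SimpleGraph V) [DecidableRel G.Adj] (k : ℕ) (hk : 2 ≤ k)
    (hcard : k ≤ Fintype.card V)
    (hdeg : (Fintype.card V : ℝ) / (k : ℝ) + (k : ℝ) ≤ (G.minDegree : ℝ)) :
    ∀ (fuel : ℕ) (U : Finset V), k ≤ U.card + fuel → U.card + 1 ≤ k →
      U.card + 1 ≤ (comps G U).card →
      ∃ s : ℕ, s < k ∧ ∃ U' : Finset V, U'.card ≤ s - 1 ∧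
        ∃ P : Fin s → Finset V,
          (∀ i j, i ≠ j → Disjoint (P i) (P j)) ∧
          (Finset.univ.biUnion P = Finset.univ \ U') ∧
          (∀ i j, i ≠ j → ∀ x ∈ P i, ∀ y ∈ P j, ¬ G.Adj x y) ∧
          (∀ i, TwoConnected (G.induce ((P i : Finset V) : Set V))) := by
  have hV : Nonempty V := by rw [← Fintype.card_pos_iff]; omega
  have hδ : k + 1 ≤ G.minDegree := by
    have h1 : (1 : ℝ) ≤ (Fintype.card V : ℝ) / (k : ℝ) := by
      rw [le_div_iff₀ (by exact_mod_cast (by omega : 0 < k))]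
      simpa using (by exact_mod_cast hcard : (k : ℝ) ≤ (Fintype.card V : ℝ))
    have : ((k : ℝ) + 1) ≤ (G.minDegree : ℝ) := by linarith
    exact_mod_cast this
  intro fuel
  induction fuel with
  | zero =>
    intro U hfuel hU1 hU2
    have := comps_count hk hcard hdeg hU1
    omega
  | succ m ih =>
    intro U hfuel hU1 hU2
    have hcount := comps_count hk hcard hdeg hU1
    have hUk2 : U.card + 2 ≤ k := by omega
    have hbig : ∀ C₀ ∈ comps G U, 3 ≤ C₀.card := by
      intro C₀ hC₀
      obtain ⟨x, hx, rfl⟩ := mem_comps.1 hC₀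
      have h1 := compF_card (G := G) (U := U) hx
      have h2 := G.minDegree_le_degree x
      omega
    by_cases hall : ∀ C ∈ comps G U, TwoConnected (G.induce ((C : Finset V) : Set V))
    · -- all components are 2-connected: done
      refine ⟨(comps G U).card, hcount, U, by omega,
        fun i => ((comps G U).equivFin.symm i : Finset V), ?_, ?_, ?_, ?_⟩
      · intro i j hij
        refine comps_disjoint ((comps G U).equivFin.symm i).2 ((comps G U).equivFin.symm j).2 ?_
        intro h
        exact hij ((comps G U).equivFin.symm.injective (Subtype.ext h))
      · ext z
        simp only [Finset.mem_biUnion, Finset.mem_univ, true_and]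
        constructor
        · rintro ⟨i, hi⟩
          have : z ∈ (comps G U).biUnion id :=
            Finset.mem_biUnion.2 ⟨_, ((comps G U).equivFin.symm i).2, hi⟩
          rwa [comps_biUnion] at this
        · intro hz
          have hz' : z ∈ (comps G U).biUnion id := by rwa [comps_biUnion]
          obtain ⟨C, hC, hzC⟩ := Finset.mem_biUnion.1 hz'
          exact ⟨(comps G U).equivFin ⟨C, hC⟩, by simpa using hzC⟩
      · intro i j hij x hx y hy hadj
        obtain ⟨x', hx', hex⟩ := mem_comps.1 ((comps G U).equivFin.symm i).2
        obtain ⟨y', hy', hey⟩ := mem_comps.1 ((comps G U).equivFin.symm j).2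
        have hx2 : x ∈ compF G U x' := by rw [hex]; exact hx
        have hy2 : y ∈ compF G U y' := by rw [hey]; exact hy
        have hxU : x ∉ U := (Finset.mem_sdiff.1 (compF_subset hx' hx2)).2
        have hyU : y ∉ U := (Finset.mem_sdiff.1 (compF_subset hy' hy2)).2
        have hPi : ((comps G U).equivFin.symm i : Finset V) = compF G U x := by
          rw [← hex]; exact compF_eq hx2
        have hPj : ((comps G U).equivFin.symm j : Finset V) = compF G U y := by
          rw [← hey]; exact compF_eq hy2
        have h3 : y ∈ compF G U x := mem_compF.2 (SimpleGraph.Adj.reachable ⟨hadj, hxU, hyU⟩)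
        have h4 : compF G U x = compF G U y := compF_eq h3
        exact hij ((comps G U).equivFin.symm.injective (Subtype.ext (by rw [hPi, hPj, h4])))
      · intro i
        exact hall _ ((comps G U).equivFin.symm i).2
    · -- some component C is not 2-connected: find a cut vertex and recurse
      push_neg at hall
      obtain ⟨C, hC, hnot⟩ := hall
      have hC3 : 3 ≤ C.card := hbig C hC
      have hcardC : Fintype.card ((C : Finset V) : Set V) = C.card := by
        rw [← Set.toFinset_card]; simp
      obtain ⟨v, hv⟩ : ∃ v : ((C : Finset V) : Set V),
          ¬ ((G.induce ((C : Finset V) : Set V)).induce {u | u ≠ v}).Connected := by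
        have := not_and.1 hnot (by rw [hcardC]; exact hC3)
        push_neg at this
        exact this
      have hvC : (v : V) ∈ C := v.2
      have hvU : (v : V) ∉ U := by
        obtain ⟨x, hx, rfl⟩ := mem_comps.1 hC
        exact (Finset.mem_sdiff.1 (compF_subset hx hvC)).2
      set U' : Finset V := insert (v : V) U with hU'def
      have hU'card : U'.card = U.card + 1 := Finset.card_insert_of_notMem hvU
      have hsubU' : U ⊆ U' := Finset.subset_insert _ _
      have hne : Nonempty ({u : ((C : Finset V) : Set V) | u ≠ v}) := by
        obtain ⟨w, hwC, hwv⟩ := Finset.exists_mem_ne (by omega : 1 < C.card) (v : V)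
        exact ⟨⟨⟨w, hwC⟩, fun h => hwv (congrArg Subtype.val h)⟩⟩
      haveI := hne
      have hpre : ¬ ((G.induce ((C : Finset V) : Set V)).induce {u | u ≠ v}).Preconnected :=
        fun hp => hv ⟨hp⟩
      unfold SimpleGraph.Preconnected at hpre
      push_neg at hpre
      obtain ⟨a, b, hab⟩ := hpre
      set a0 : V := ((a : ((C : Finset V) : Set V)) : V) with ha0def
      set b0 : V := ((b : ((C : Finset V) : Set V)) : V) with hb0def
      have ha0C : a0 ∈ C := (a : ((C : Finset V) : Set V)).2
      have hb0C : b0 ∈ C := (b : ((C : Finset V) : Set V)).2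
      have ha0v : a0 ≠ (v : V) := fun h => a.2 (Subtype.ext h)
      have hb0v : b0 ≠ (v : V) := fun h => b.2 (Subtype.ext h)
      have hCsub : ∀ {z : V}, z ∈ C → z ∉ U := by
        obtain ⟨x, hx, rfl⟩ := mem_comps.1 hC
        intro z hz
        exact (Finset.mem_sdiff.1 (compF_subset hx hz)).2
      have hCeq : ∀ {z : V}, z ∈ C → compF G U z = C := by
        obtain ⟨x, hx, rfl⟩ := mem_comps.1 hC
        intro z hz
        exact (compF_eq hz).symm
      have hmemU' : ∀ {z : V}, z ∈ C → z ≠ (v : V) → z ∉ U' := by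
        intro z hzC hzv hmem
        rcases Finset.mem_insert.1 hmem with h | h
        · exact hzv h
        · exact hCsub hzC h
      have ha0U' : a0 ∉ U' := hmemU' ha0C ha0v
      have hb0U' : b0 ∉ U' := hmemU' hb0C hb0v
      have hsubD : ∀ {z y : V}, z ∈ C → z ≠ (v : V) → y ∈ compF G U' z →
          y ∈ C ∧ y ≠ (v : V) := by
        intro z y hzC hzv hy
        have hzU' : z ∉ U' := hmemU' hzC hzv
        have hr' := mem_compF.1 hy
        have hyU' : y ∉ U' := reach_notmem hzU' hr'
        have hyC : y ∈ compF G U z :=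
          mem_compF.2 (SimpleGraph.Reachable.mono (del_mono hsubU') hr')
        rw [hCeq hzC] at hyC
        exact ⟨hyC, fun h => hyU' (by rw [h]; exact Finset.mem_insert_self _ _)⟩
      have key : compF G U' a0 ≠ compF G U' b0 := by
        intro heq
        have hbmem : b0 ∈ compF G U' a0 := by rw [heq]; exact compF_self b0
        have hreach := reach_in_compF (compF_self a0) hbmem
        let F : ((del G U').induce ((compF G U' a0 : Finset V) : Set V)) →g
            ((G.induce ((C : Finset V) : Set V)).induce {u | u ≠ v}) :=
          { toFun := fun y =>
              ⟨⟨(y : V), (hsubD ha0C ha0v (Finset.mem_coe.1 y.2)).1⟩,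
                fun h => (hsubD ha0C ha0v (Finset.mem_coe.1 y.2)).2 (congrArg Subtype.val h)⟩,
            map_rel' := fun h => h.1 }
        have hmap := hreach.map F
        have hFa : F ⟨a0, compF_self a0⟩ = a := Subtype.ext (Subtype.ext rfl)
        have hFb : F ⟨b0, hbmem⟩ = b := Subtype.ext (Subtype.ext rfl)
        rw [hFa, hFb] at hmap
        exact hab hmap
      have hmm : ∀ D : ↥(comps G U'), ∃ x, x ∉ U' ∧ compF G U' x = (D : Finset V) :=
        fun D => mem_comps.1 D.2
      choose rep hrep1 hrep2 using hmm
      let g : ↥(comps G U') → ↥(comps G U) := fun D =>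
        ⟨compF G U (rep D), mem_comps.2 ⟨rep D, fun h => hrep1 D (hsubU' h), rfl⟩⟩
      have hg : ∀ (D : ↥(comps G U')) (y : V), y ∈ (D : Finset V) →
          (g D : Finset V) = compF G U y := by
        intro D y hy
        have h1 : y ∈ compF G U' (rep D) := by rw [hrep2 D]; exact hy
        have h2 : y ∈ compF G U (rep D) :=
          mem_compF.2 (SimpleGraph.Reachable.mono (del_mono hsubU') (mem_compF.1 h1))
        exact compF_eq h2
      have hsurj : Function.Surjective g := by
        intro C₀
        obtain ⟨z, hz, hez⟩ := mem_comps.1 C₀.2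
        have hc2 : 1 < (C₀ : Finset V).card := by have := hbig _ C₀.2; omega
        obtain ⟨w, hwC, hwv⟩ := Finset.exists_mem_ne hc2 (v : V)
        have hwC' : w ∈ compF G U z := by rw [hez]; exact hwC
        have hwU : w ∉ U := (Finset.mem_sdiff.1 (compF_subset hz hwC')).2
        have hwU' : w ∉ U' := by
          intro hmem
          rcases Finset.mem_insert.1 hmem with h | h
          · exact hwv h
          · exact hwU h
        refine ⟨⟨compF G U' w, mem_comps.2 ⟨w, hwU', rfl⟩⟩, ?_⟩
        apply Subtype.ext
        rw [hg ⟨compF G U' w, mem_comps.2 ⟨w, hwU', rfl⟩⟩ w (compF_self w)]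
        rw [← hez]
        exact (compF_eq hwC').symm
      have hninj : ¬ Function.Injective g := by
        intro hinj
        have hDa : compF G U' a0 ∈ comps G U' := mem_comps.2 ⟨a0, ha0U', rfl⟩
        have hDb : compF G U' b0 ∈ comps G U' := mem_comps.2 ⟨b0, hb0U', rfl⟩
        have e1 : (g ⟨_, hDa⟩ : Finset V) = compF G U a0 := hg _ a0 (compF_self a0)
        have e2 : (g ⟨_, hDb⟩ : Finset V) = compF G U b0 := hg _ b0 (compF_self b0)
        have heq : g ⟨_, hDa⟩ = g ⟨_, hDb⟩ :=
          Subtype.ext (by rw [e1, e2, hCeq ha0C, hCeq hb0C])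
        exact key (congrArg Subtype.val (hinj heq))
      have hlt : (comps G U).card < (comps G U').card := by
        have := Fintype.card_lt_of_surjective_not_injective g hsurj hninj
        simpa [Fintype.card_coe] using this
      exact ih U' (by omega) (by omega) (by omega)

end Aux

/-- Let `k ≥ 2` and let `G` be a graph with `|V(G)| ≥ k` and `δ(G) ≥ |V(G)|/k + k`. Then
there exist an integer `s < k` and a set `U ⊆ V(G)` with `|U| ≤ s − 1` such that `G − U`
is the disjoint union of `s` vertex-disjoint 2-connected graphs. -/
theorem statement18 {V : Type*} [Fintype V] [DecidableEq V] (k : ℕ) (hk : 2 ≤ k)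
    (G : SimpleGraph V) [DecidableRel G.Adj]
    (hcard : k ≤ Fintype.card V)
    (hdeg : (Fintype.card V : ℝ) / (k : ℝ) + (k : ℝ) ≤ (G.minDegree : ℝ)) :
    ∃ s : ℕ, s < k ∧ ∃ U : Finset V, U.card ≤ s - 1 ∧
      ∃ P : Fin s → Finset V,
        (∀ i j, i ≠ j → Disjoint (P i) (P j)) ∧
        (Finset.univ.biUnion P = Finset.univ \ U) ∧
        (∀ i j, i ≠ j → ∀ x ∈ P i, ∀ y ∈ P j, ¬ G.Adj x y) ∧
        (∀ i, TwoConnected (G.induce ((P i : Finset V) : Set V))) := by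
  have hV : Nonempty V := Fintype.card_pos_iff.1 (by omega)
  have h1 : 1 ≤ (comps G ∅).card := by
    have hne : ((Finset.univ \ (∅ : Finset V)).image (compF G ∅)).Nonempty :=
      Finset.Nonempty.image (by simpa using Finset.univ_nonempty) _
    exact Finset.card_pos.2 hne
  exact recMain G k hk hcard hdeg k ∅ (by simp) (by simp only [Finset.card_empty]; omega) (by simpa using h1)
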